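/- Let C > 0 and 0 < α < 1 be constants such that Δ_ρ^S(m) ≤ C m^α and N_ρ^S(m) ≤ exp(C m^α) for all m (inverted orbit bounds for the action of the first Grigorchuk group on the orbit of ρ = 1^∞). Then there is a constant C_2 > 0 such that |P_2(ℓ)| ≤ exp(C_2 ℓ^α) for every sufficiently large n and every ℓ ≤ r_n. -/

import Mathlib

noncomputable section

/-! ### Generalities: the group of self-homeomorphisms -/

instance homeoGroup {X : Type*} [TopologicalSpace X] : Group (X ≃ₜ X) where
  mul f g := g.trans f
  one := Homeomorph.refl X
  inv := Homeomorph.symm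
  mul_assoc a b c := Homeomorph.ext fun _ => rfl
  one_mul a := Homeomorph.ext fun _ => rfl
  mul_one a := Homeomorph.ext fun _ => rfl
  inv_mul_cancel a := Homeomorph.ext a.symm_apply_apply

/-! ### Homeomorphisms of a product with a discrete factor -/

theorem cont_fibered {X Y Z : Type*} [TopologicalSpace X] [TopologicalSpace Y]
    [DiscreteTopology Y] [TopologicalSpace Z] (f : X → Y → Z) (hf : ∀ y, Continuous (f · y)) :
    Continuous (fun p : X × Y => f p.1 p.2) := by
  rw [continuous_iff_continuousAt]
  rintro ⟨x, y⟩
  have hmem : {p : X × Y | p.2 = y} ∈ nhds (x, y) := by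
    have ho : IsOpen {p : X × Y | p.2 = y} := by
      have h : ({p : X × Y | p.2 = y}) = Prod.snd ⁻¹' {y} := rfl
      rw [h]; exact (isOpen_discrete _).preimage continuous_snd
    exact ho.mem_nhds rfl
  refine ContinuousAt.congr (((hf y).comp continuous_fst).continuousAt) ?_
  filter_upwards [hmem] with p hp
  simp [hp]

/-- The homeomorphism of `X × Y`, `Y` discrete, acting on each fiber `X × {y}`
by the homeomorphism `F y`. -/
def fiberedHomeo {X Y : Type*} [TopologicalSpace X] [TopologicalSpace Y] [DiscreteTopology Y]
    (F : Y → X ≃ₜ X) : (X × Y) ≃ₜ (X × Y) where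
  toEquiv := Equiv.prodCongrLeft fun y => (F y).toEquiv
  continuous_toFun := by
    refine Continuous.prodMk ?_ continuous_snd
    exact cont_fibered (fun x y => F y x) (fun y => (F y).continuous)
  continuous_invFun := by
    refine Continuous.prodMk ?_ continuous_snd
    exact cont_fibered (fun x y => (F y).symm x) (fun y => (F y).symm.continuous)

/-- The homeomorphism of `X × Y`, `Y` discrete, permuting the fibers according to a
permutation of `Y` and acting trivially in the `X`-coordinate. -/
def basePermHomeo {X Y : Type*} [TopologicalSpace X] [TopologicalSpace Y] [DiscreteTopology Y]
    (e : Equiv.Perm Y) : (X × Y) ≃ₜ (X × Y) where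
  toEquiv := Equiv.prodCongr (Equiv.refl X) e
  continuous_toFun :=
    continuous_fst.prodMk (continuous_of_discreteTopology.comp continuous_snd)
  continuous_invFun :=
    continuous_fst.prodMk (continuous_of_discreteTopology.comp continuous_snd)

/-! ### The Cantor set -/

/-- The Cantor set `{0,1}^ℕ`. -/
abbrev Cantor : Type := ℕ → Bool

/-- Prepending a finite word to an element of the Cantor set. -/
def wordAppend (w : List Bool) (ξ : Cantor) : Cantor :=
  fun n => if h : n < w.length then w[n] else ξ (n - w.length)

/-- A dyadic partition set: a finite set of binary words whose cylinders partition
the Cantor set. -/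
def IsDyadicPartition (A : Finset (List Bool)) : Prop :=
  ∀ ξ : Cantor, ∃! w : List Bool, w ∈ A ∧ ∃ ξ' : Cantor, wordAppend w ξ' = ξ

/-- The defining condition for elements of Thompson's group `V`: a homeomorphism of the
Cantor set given by prefix replacement along a bijection of two dyadic partition sets. -/
def IsThompsonVMap (γ : Cantor ≃ₜ Cantor) : Prop :=
  ∃ (A B : Finset (List Bool)) (f : List Bool → List Bool),
    IsDyadicPartition A ∧ IsDyadicPartition B ∧ A.card = B.card ∧ Set.BijOn f A B ∧
    ∀ w ∈ A, ∀ ξ : Cantor, γ (wordAppend w ξ) = wordAppend (f w) ξ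

/-- Thompson's group `V`, as a group of homeomorphisms of the Cantor set. -/
def ThompsonV : Subgroup (Cantor ≃ₜ Cantor) :=
  Subgroup.closure {γ | IsThompsonVMap γ}

theorem cantor_core_continuous (G : ℕ → Bool → Bool → Bool → Bool → Bool → Bool → Bool) :
    Continuous (fun ξ : Cantor =>
      (fun n => G n (ξ 0) (ξ 1) (ξ 2) (ξ (n - 1)) (ξ n) (ξ (n + 1)) : Cantor)) := by
  apply continuous_pi
  intro n
  have h : Continuous (fun ξ : Cantor =>
      ((ξ 0, ξ 1, ξ 2, ξ (n - 1), ξ n, ξ (n + 1)) : Bool × Bool × Bool × Bool × Bool × Bool)) :=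
    (continuous_apply 0).prodMk ((continuous_apply 1).prodMk
      ((continuous_apply 2).prodMk ((continuous_apply (n-1)).prodMk
      ((continuous_apply n).prodMk (continuous_apply (n+1))))))
  exact (continuous_of_discreteTopology
    (f := fun p : Bool × Bool × Bool × Bool × Bool × Bool =>
      G n p.1 p.2.1 p.2.2.1 p.2.2.2.1 p.2.2.2.2.1 p.2.2.2.2.2)).comp h

def consC (b : Bool) (ξ : Cantor) : Cantor := fun n => match n with
  | 0 => b
  | n+1 => ξ n

def shiftC (ξ : Cantor) : Cantor := fun n => ξ (n + 1)

theorem consC_continuous (b : Bool) : Continuous (consC b) := by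
  apply continuous_pi
  intro n
  match n with
  | 0 => exact continuous_const
  | n+1 => exact continuous_apply n

theorem shiftC_continuous : Continuous shiftC :=
  continuous_pi fun n => continuous_apply (n + 1)

/-! ### Thompson's generator `X₀` as a homeomorphism of the Cantor set -/

def x0core (n : ℕ) (b0 b1 : Bool) (w v u : Bool) : Bool :=
  if b0 = false then
    (if b1 = false then u
     else if n = 0 then true else if n = 1 then false else v)
  else (if n ≤ 1 then true else w)

def x0invcore (n : ℕ) (b0 b1 : Bool) (w v u : Bool) : Bool :=
  if b0 = false then (if n ≤ 1 then false else w)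
  else if b1 = false then (if n = 0 then false else if n = 1 then true else v)
  else (if n = 0 then true else u)

/-- `X₀ : 00ξ ↦ 0ξ`, `01ξ ↦ 10ξ`, `1ξ ↦ 11ξ`. -/
def x0fun (ξ : Cantor) : Cantor := fun n => x0core n (ξ 0) (ξ 1) (ξ (n - 1)) (ξ n) (ξ (n + 1))

def x0inv (ξ : Cantor) : Cantor := fun n => x0invcore n (ξ 0) (ξ 1) (ξ (n - 1)) (ξ n) (ξ (n + 1))

theorem x0_left_inv : Function.LeftInverse x0inv x0fun := by
  intro ξ
  funext n
  rcases hb0 : ξ 0 with _ | _ <;> rcases hb1 : ξ 1 with _ | _ <;>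
    rcases n with _ | _ | n <;>
    simp [x0fun, x0inv, x0core, x0invcore, hb0, hb1]

theorem x0_right_inv : Function.RightInverse x0inv x0fun := by
  intro ξ
  funext n
  rcases hb0 : ξ 0 with _ | _ <;> rcases hb1 : ξ 1 with _ | _ <;>
    rcases n with _ | _ | n <;>
    simp [x0fun, x0inv, x0core, x0invcore, hb0, hb1]

/-- Thompson's generator `X₀` as a homeomorphism of the Cantor set. -/
def X0c : Cantor ≃ₜ Cantor where
  toEquiv := ⟨x0fun, x0inv, x0_left_inv, x0_right_inv⟩
  continuous_toFun := cantor_core_continuous fun n b0 b1 _ w v u => x0core n b0 b1 w v u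
  continuous_invFun := cantor_core_continuous fun n b0 b1 _ w v u => x0invcore n b0 b1 w v u

/-- The homeomorphism `Cantor ≃ₜ Cantor × Bool` splitting off the first letter. -/
def splitHomeo : Cantor ≃ₜ Cantor × Bool where
  toEquiv := ⟨fun ξ => (shiftC ξ, ξ 0), fun p => consC p.2 p.1,
    fun ξ => by funext n; rcases n with _ | n <;> rfl,
    fun p => by
      refine Prod.ext ?_ rfl
      funext n; rfl⟩
  continuous_toFun := shiftC_continuous.prodMk (continuous_apply 0)
  continuous_invFun := by
    apply continuous_pi
    intro n
    match n with
    | 0 => exact continuous_snd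
    | n+1 => exact (continuous_apply n).comp continuous_fst

/-- Thompson's generator `X₁ = 1X₀`: the copy of `X₀` supported on the cylinder `1C`. -/
def X1c : Cantor ≃ₜ Cantor :=
  splitHomeo.trans ((fiberedHomeo fun b =>
    if b = true then X0c else Homeomorph.refl Cantor).trans splitHomeo.symm)

end

noncomputable section

/-! ### The Grigorchuk generators -/

namespace Grig

def aFun : List Bool → List Bool
  | [] => []
  | x :: w => (!x) :: w

mutual
  def bFun : List Bool → List Bool
    | [] => []
    | false :: w => false :: aFun w
    | true :: w => true :: cFun w
  def cFun : List Bool → List Bool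
    | [] => []
    | false :: w => false :: aFun w
    | true :: w => true :: dFun w
  def dFun : List Bool → List Bool
    | [] => []
    | false :: w => false :: w
    | true :: w => true :: bFun w
end

theorem aFun_involutive : Function.Involutive aFun := by
  intro w
  match w with
  | [] => rfl
  | x :: w => simp [aFun]

theorem bcd_involutive :
    ∀ w : List Bool, bFun (bFun w) = w ∧ cFun (cFun w) = w ∧ dFun (dFun w) = w := by
  intro w
  induction w with
  | nil => exact ⟨rfl, rfl, rfl⟩
  | cons x w ih =>
    rcases x with _ | _
    · simp [bFun, cFun, dFun, aFun_involutive w]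
    · simp [bFun, cFun, dFun, ih.1, ih.2.1, ih.2.2]

theorem bFun_involutive : Function.Involutive bFun := fun w => (bcd_involutive w).1
theorem cFun_involutive : Function.Involutive cFun := fun w => (bcd_involutive w).2.1
theorem dFun_involutive : Function.Involutive dFun := fun w => (bcd_involutive w).2.2

theorem aFun_length : ∀ w : List Bool, (aFun w).length = w.length := by
  intro w
  match w with
  | [] => rfl
  | x :: w => simp [aFun]

theorem bcd_length : ∀ w : List Bool,
    (bFun w).length = w.length ∧ (cFun w).length = w.length ∧ (dFun w).length = w.length := by
  intro w
  induction w with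
  | nil => exact ⟨rfl, rfl, rfl⟩
  | cons x w ih =>
    rcases x with _ | _
    · simp [bFun, cFun, dFun, aFun_length w]
    · simp [bFun, cFun, dFun, ih.1, ih.2.1, ih.2.2]

theorem bFun_length : ∀ w, (bFun w).length = w.length := fun w => (bcd_length w).1
theorem cFun_length : ∀ w, (cFun w).length = w.length := fun w => (bcd_length w).2.1
theorem dFun_length : ∀ w, (dFun w).length = w.length := fun w => (bcd_length w).2.2

/-- The generators of the first Grigorchuk group as permutations of the vertex set
`{0,1}*` of the rooted binary tree. -/
def aPerm : Equiv.Perm (List Bool) := aFun_involutive.toPerm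
def bPerm : Equiv.Perm (List Bool) := bFun_involutive.toPerm
def cPerm : Equiv.Perm (List Bool) := cFun_involutive.toPerm
def dPerm : Equiv.Perm (List Bool) := dFun_involutive.toPerm

/-- The generating set `S = {a, b, c, d}` (a set of involutions). -/
def Sset : Set (Equiv.Perm (List Bool)) := {aPerm, bPerm, cPerm, dPerm}

/-- The first Grigorchuk group. -/
def Grigorchuk : Subgroup (Equiv.Perm (List Bool)) := Subgroup.closure Sset

/-- Word length with respect to `S = {a, b, c, d}`. -/
def wordLength (g : Equiv.Perm (List Bool)) : ℕ :=
  sInf {k | ∃ l : List (Equiv.Perm (List Bool)),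
    (∀ x ∈ l, x ∈ Sset) ∧ l.length = k ∧ l.prod = g}

/-- The growth function of the first Grigorchuk group with respect to `S`. -/
def growthGrig (m : ℕ) : ℕ :=
  Nat.card {g : Equiv.Perm (List Bool) |
    ∃ l : List (Equiv.Perm (List Bool)), (∀ x ∈ l, x ∈ Sset) ∧ l.length ≤ m ∧ l.prod = g}

/-! ### Level transfer -/

def levelFun (n : ℕ) (f : List Bool → List Bool) (v : Fin n → Bool) : Fin n → Bool :=
  fun i => (f (List.ofFn v)).getD i false

theorem levelFun_involutive (n : ℕ) (f : List Bool → List Bool)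
    (hlen : ∀ l, (f l).length = l.length) (hinv : Function.Involutive f) :
    Function.Involutive (levelFun n f) := by
  intro v
  have key : ∀ u : Fin n → Bool, List.ofFn (levelFun n f u) = f (List.ofFn u) := by
    intro u
    apply List.ext_getElem
    · simp [hlen]
    · intro i h1 h2
      simp only [List.getElem_ofFn]
      simp [levelFun, List.getD_eq_getElem, h2]
  funext i
  simp only [levelFun, key v, hinv (List.ofFn v)]
  simp [List.getD_eq_getElem]

/-- The images `a_n, b_n, c_n, d_n` of the Grigorchuk generators in `Sym(X_n)`,
where the `n`-th level `X_n = {0,1}^n` is identified with `Fin n → Bool`. -/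
def aLev (n : ℕ) : Equiv.Perm (Fin n → Bool) :=
  (levelFun_involutive n aFun aFun_length aFun_involutive).toPerm
def bLev (n : ℕ) : Equiv.Perm (Fin n → Bool) :=
  (levelFun_involutive n bFun bFun_length bFun_involutive).toPerm
def cLev (n : ℕ) : Equiv.Perm (Fin n → Bool) :=
  (levelFun_involutive n cFun cFun_length cFun_involutive).toPerm
def dLev (n : ℕ) : Equiv.Perm (Fin n → Bool) :=
  (levelFun_involutive n dFun dFun_length dFun_involutive).toPerm

end Grig

/-! ### The space `C_{Y_n}` and the generating set `T_n` -/

namespace TV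

/-- The `n`-th level `X_n = {0,1}^n` of the binary tree. -/
abbrev XL (n : ℕ) : Type := Fin n → Bool

/-- `C_{Y_n} = C × Y_n` with `Y_n = X_n × {1,2,3,4}`; the sheets are indexed by `Fin 4`. -/
abbrev Mn (n : ℕ) : Type := Cantor × (XL n × Fin 4)

/-- `ρ_n = 1^n`. -/
def rhoL (n : ℕ) : XL n := fun _ => true
/-- `η_n = 1^{n-1}0`. -/
def etaL (n : ℕ) : XL n := fun i => decide ((i : ℕ) < n - 1)
/-- `θ_n = 01^{n-1}`. -/
def thetaL (n : ℕ) : XL n := fun i => decide (0 < (i : ℕ))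

/-- A type 1 generator: an element of `S_n` acting diagonally on the four sheets. -/
def type1Gen (n : ℕ) (s : Equiv.Perm (XL n)) : Mn n ≃ₜ Mn n :=
  basePermHomeo (s.prodCongr (Equiv.refl (Fin 4)))

/-- The set of type 1 generators (the truncated Grigorchuk generators). -/
def Type1Set (n : ℕ) : Set (Mn n ≃ₜ Mn n) :=
  {type1Gen n (Grig.aLev n), type1Gen n (Grig.bLev n),
   type1Gen n (Grig.cLev n), type1Gen n (Grig.dLev n)}

/-- A type 2 generator: an element of `Sym(4)_{η_n}`. -/
def type2Gen (n : ℕ) (π : Equiv.Perm (Fin 4)) : Mn n ≃ₜ Mn n :=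
  basePermHomeo (Equiv.prodCongrRight fun x : XL n =>
    if x = etaL n then π else Equiv.refl (Fin 4))

/-- The copy `Sym(4)_{η_n}` of the symmetric group over `η_n` (type 2 generators). -/
def Type2Set (n : ℕ) : Set (Mn n ≃ₜ Mn n) := Set.range (type2Gen n)

/-- The linking transposition `τ_n` (type 3), exchanging the first sheets over
`ρ_n` and `θ_n`. -/
def tauN (n : ℕ) : Mn n ≃ₜ Mn n :=
  basePermHomeo (Equiv.swap (rhoL n, (0 : Fin 4)) (thetaL n, (0 : Fin 4)))

/-- `X₁^{(n)}`: the copy of `X₀` supported on the fourth sheet over `ρ_n` (type 4). -/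
def X1n (n : ℕ) : Mn n ≃ₜ Mn n :=
  fiberedHomeo fun y : XL n × Fin 4 =>
    if y = (rhoL n, (3 : Fin 4)) then X0c else Homeomorph.refl Cantor

/-! The homeomorphism of `C × {1,2,3,4}` acting as `X₀` on `D = C_2 ⊔ C_3` (sheets `1`, `2`
in the `Fin 4` indexing) under the identification `(ξ, i) ↦ (i-2)ξ`, and trivial elsewhere. -/

def x0dSheet (i : Fin 4) (b0 : Bool) : Fin 4 :=
  if i = 1 then (if b0 = false then 1 else 2) else i

def x0dCore (i : Fin 4) (n : ℕ) (b0 w v u : Bool) : Bool :=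
  if i = 1 then (if b0 = false then u else if n = 0 then false else v)
  else if i = 2 then (if n = 0 then true else w)
  else v

def x0dSheetInv (i : Fin 4) (b0 : Bool) : Fin 4 :=
  if i = 2 then (if b0 = false then 1 else 2) else i

def x0dCoreInv (i : Fin 4) (n : ℕ) (b0 w v u : Bool) : Bool :=
  if i = 1 then (if n = 0 then false else w)
  else if i = 2 then (if b0 = false then (if n = 0 then true else v) else u)
  else v

def x0dFun (p : Cantor × Fin 4) : Cantor × Fin 4 :=
  ((fun n => x0dCore p.2 n (p.1 0) (p.1 (n - 1)) (p.1 n) (p.1 (n + 1))),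
    x0dSheet p.2 (p.1 0))

def x0dInvFun (p : Cantor × Fin 4) : Cantor × Fin 4 :=
  ((fun n => x0dCoreInv p.2 n (p.1 0) (p.1 (n - 1)) (p.1 n) (p.1 (n + 1))),
    x0dSheetInv p.2 (p.1 0))

theorem x0d_left_inv : Function.LeftInverse x0dInvFun x0dFun := by
  rintro ⟨ξ, i⟩
  rcases hb0 : ξ 0 with _ | _ <;> fin_cases i <;>
    refine Prod.ext (funext fun n => ?_) ?_ <;>
    first
      | (rcases n with _ | n <;>
          simp [x0dFun, x0dInvFun, x0dCore, x0dCoreInv, x0dSheet, x0dSheetInv, hb0])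
      | simp [x0dFun, x0dInvFun, x0dCore, x0dCoreInv, x0dSheet, x0dSheetInv, hb0]

theorem x0d_right_inv : Function.RightInverse x0dInvFun x0dFun := by
  rintro ⟨ξ, i⟩
  rcases hb0 : ξ 0 with _ | _ <;> fin_cases i <;>
    refine Prod.ext (funext fun n => ?_) ?_ <;>
    first
      | (rcases n with _ | n <;>
          simp [x0dFun, x0dInvFun, x0dCore, x0dCoreInv, x0dSheet, x0dSheetInv, hb0])
      | simp [x0dFun, x0dInvFun, x0dCore, x0dCoreInv, x0dSheet, x0dSheetInv, hb0]

theorem x0dFun_continuous : Continuous x0dFun := by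
  have h : Continuous fun p : Cantor × Fin 4 => x0dFun (p.1, p.2) := by
    refine cont_fibered (Z := Cantor × Fin 4) (fun ξ i => x0dFun (ξ, i)) fun i => ?_
    refine Continuous.prodMk ?_ ?_
    · exact cantor_core_continuous fun n b0 _ _ w v u => x0dCore i n b0 w v u
    · exact Continuous.comp
        (continuous_of_discreteTopology (α := Bool) (f := x0dSheet i)) (continuous_apply 0)
  simpa using h

theorem x0dInvFun_continuous : Continuous x0dInvFun := by
  have h : Continuous fun p : Cantor × Fin 4 => x0dInvFun (p.1, p.2) := by
    refine cont_fibered (Z := Cantor × Fin 4) (fun ξ i => x0dInvFun (ξ, i)) fun i => ?_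
    refine Continuous.prodMk ?_ ?_
    · exact cantor_core_continuous fun n b0 _ _ w v u => x0dCoreInv i n b0 w v u
    · exact Continuous.comp
        (continuous_of_discreteTopology (α := Bool) (f := x0dSheetInv i)) (continuous_apply 0)
  simpa using h

def X0D : (Cantor × Fin 4) ≃ₜ (Cantor × Fin 4) where
  toEquiv := ⟨x0dFun, x0dInvFun, x0d_left_inv, x0d_right_inv⟩
  continuous_toFun := x0dFun_continuous
  continuous_invFun := x0dInvFun_continuous

/-- Reshuffling `C × (X_n × {1,…,4}) ≃ₜ (C × {1,…,4}) × X_n`. -/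
def reshuffle (n : ℕ) : Mn n ≃ₜ (Cantor × Fin 4) × XL n :=
  ((Homeomorph.refl Cantor).prodCongr (Homeomorph.prodComm (XL n) (Fin 4))).trans
    (Homeomorph.prodAssoc Cantor (Fin 4) (XL n)).symm

/-- `X₀^{(n)}`: acting as `X₀` on `D_n = C_{(ρ_n,2)} ⊔ C_{(ρ_n,3)}` (type 4). -/
def X0n (n : ℕ) : Mn n ≃ₜ Mn n :=
  (reshuffle n).trans ((fiberedHomeo fun x : XL n =>
    if x = rhoL n then X0D else Homeomorph.refl (Cantor × Fin 4)).trans (reshuffle n).symm)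

/-- The type 4 generators. -/
def Type4Set (n : ℕ) : Set (Mn n ≃ₜ Mn n) := {X0n n, X1n n}

/-- The generating set `T_n`. -/
def TnSet (n : ℕ) : Set (Mn n ≃ₜ Mn n) :=
  Type1Set n ∪ Type2Set n ∪ {tauN n} ∪ Type4Set n

/-- The group `W_n = ⟨T_n⟩`. -/
def Wn (n : ℕ) : Subgroup (Mn n ≃ₜ Mn n) := Subgroup.closure (TnSet n)

/-- The generators of types `2`, `3` and `4`. -/
def typeSet (n : ℕ) : ℕ → Set (Mn n ≃ₜ Mn n)
  | 2 => Type2Set n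
  | 3 => {tauN n}
  | 4 => Type4Set n
  | _ => ∅

end TV

end
/-! ### The boundary action and actions of words -/

/-- The (continuous extension to the boundary `∂T = {0,1}^ℕ` of the) action of a tree
automorphism on the boundary of the rooted binary tree. -/
def boundaryAct (g : Equiv.Perm (List Bool)) (ξ : ℕ → Bool) : ℕ → Bool :=
  fun n => (g (List.ofFn fun i : Fin (n + 1) => ξ i)).getD n false

/-- Applying a word of generators to a vertex, letter by letter: the right action of the
word `l` (the generators in `S` are involutions). -/
def wordApply (l : List (Equiv.Perm (List Bool))) (v : List Bool) : List Bool :=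
  l.foldl (fun v s => s v) v

/-- The right action of a word on a boundary point. -/
def wordApplyB (l : List (Equiv.Perm (List Bool))) (ξ : ℕ → Bool) : ℕ → Bool :=
  l.foldl (fun ξ s => boundaryAct s ξ) ξ

/-- The boundary point `ρ = 1^∞`. -/
def rhoInf : ℕ → Bool := fun _ => true

/-- The vertex `ρ_n = 1^n` of the `n`-th level. -/
def rhoVertex (n : ℕ) : List Bool := List.replicate n true

/-- The vertex `η_n = 1^{n-1}0` of the `n`-th level. -/
def etaVertex (n : ℕ) : List Bool := List.replicate (n - 1) true ++ [false]
/-! ### Inverted orbits of the Grigorchuk group on the orbit of `ρ = 1^∞` -/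

/-- The inverted orbit `O_ξ(l) = {ξ, ξ·s_ℓ, ξ·s_{ℓ-1}s_ℓ, …, ξ·s_1⋯s_ℓ}` of the word
`l = s_1 ⋯ s_ℓ` at the boundary point `ξ`. -/
def invOrbitB (l : List (Equiv.Perm (List Bool))) (ξ : ℕ → Bool) : Set (ℕ → Bool) :=
  {x | ∃ i : ℕ, x = wordApplyB (l.drop i) ξ}

/-- The inverted orbit growth function `Δ_ρ^S` of the Grigorchuk group acting on the
orbit of `ρ = 1^∞`. -/
noncomputable def DeltaB (m : ℕ) : ℕ :=
  sSup {k | ∃ l : List (Equiv.Perm (List Bool)),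
    (∀ x ∈ l, x ∈ Grig.Sset) ∧ l.length ≤ m ∧ k = Nat.card (invOrbitB l rhoInf)}

/-- The number `N_ρ^S(m)` of distinct inverted orbits of words of length at most `m`. -/
noncomputable def NorbB (m : ℕ) : ℕ :=
  Nat.card {O : Set (ℕ → Bool) | ∃ l : List (Equiv.Perm (List Bool)),
    (∀ x ∈ l, x ∈ Grig.Sset) ∧ l.length ≤ m ∧ O = invOrbitB l rhoInf}

noncomputable section

open Classical in
/-- The `S_n ∪ {1}`-part of a letter of `T_n` (as in the normal form). -/
noncomputable def gpart (n : ℕ) (t : TV.Mn n ≃ₜ TV.Mn n) : TV.Mn n ≃ₜ TV.Mn n :=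
  if t ∈ TV.Type1Set n then t else 1

open Classical in
/-- The type-`j` part of a letter of `T_n` (as in the normal form), `j ∈ {2,3,4}`. -/
noncomputable def apart (n j : ℕ) (t : TV.Mn n ≃ₜ TV.Mn n) : TV.Mn n ≃ₜ TV.Mn n :=
  if t ∈ TV.typeSet n j then t else 1

/-- The first factor `p₁` of the normal form of the word `w` over `T_n`. -/
noncomputable def p1fac (n : ℕ) (w : List (TV.Mn n ≃ₜ TV.Mn n)) : TV.Mn n ≃ₜ TV.Mn n :=
  (w.map (gpart n)).prod

/-- The factor `p_j` (`j ∈ {2,3,4}`) of the normal form of the word `w = t_1 ⋯ t_ℓ` over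
`T_n`: the product `(a_1^{(j)})^{g_1 ⋯ g_ℓ} (a_2^{(j)})^{g_2 ⋯ g_ℓ} ⋯ (a_ℓ^{(j)})^{g_ℓ}`
of conjugates (`x^h = h⁻¹xh`), where `g_i` and `a_i^{(j)}` are the type-1 part and the
type-`j` part of the letter `t_i`. -/
noncomputable def pjfac (n j : ℕ) (w : List (TV.Mn n ≃ₜ TV.Mn n)) : TV.Mn n ≃ₜ TV.Mn n :=
  (List.ofFn fun i : Fin w.length =>
    (((w.map (gpart n)).drop (i : ℕ)).prod)⁻¹ * apart n j (w.get i) *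
      ((w.map (gpart n)).drop (i : ℕ)).prod).prod

/-- The set `P_1(ℓ)`: all elements occurring as the first factor of the normal form of
some word over `T_n` of length at most `ℓ`. -/
def P1set (n ℓ : ℕ) : Set (TV.Mn n ≃ₜ TV.Mn n) :=
  {p | ∃ w : List (TV.Mn n ≃ₜ TV.Mn n),
    (∀ t ∈ w, t ∈ TV.TnSet n) ∧ w.length ≤ ℓ ∧ p = p1fac n w}

/-- The set `P_j(ℓ)`: all elements occurring as the `j`-th factor of the normal form of
some word over `T_n` of length at most `ℓ`. -/
def Pjset (n j ℓ : ℕ) : Set (TV.Mn n ≃ₜ TV.Mn n) :=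
  {p | ∃ w : List (TV.Mn n ≃ₜ TV.Mn n),
    (∀ t ∈ w, t ∈ TV.TnSet n) ∧ w.length ≤ ℓ ∧ p = pjfac n j w}

end

noncomputable section AuxProof
open Equiv TV Grig

/-! ### Flip-last-letter and take commute with the Grigorchuk generators -/

def flipL : List Bool → List Bool
  | [] => []
  | [x] => [!x]
  | x :: y :: w => x :: flipL (y :: w)

theorem flipL_length : ∀ w : List Bool, (flipL w).length = w.length := by
  intro w
  induction w with
  | nil => rfl
  | cons x t ih =>
    cases t with
    | nil => rfl
    | cons y u => simpa [flipL] using ih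

theorem flipL_cons_ne_nil (x : Bool) {z : List Bool} (h : z ≠ []) :
    flipL (x :: z) = x :: flipL z := by
  cases z with
  | nil => exact absurd rfl h
  | cons y u => rfl

theorem flipL_invol : Function.Involutive flipL := by
  intro w
  induction w with
  | nil => rfl
  | cons x t ih =>
    cases t with
    | nil => simp [flipL]
    | cons y u =>
      have hne : flipL (y :: u) ≠ [] := by
        intro h
        have := flipL_length (y :: u)
        rw [h] at this
        simp at this
      rw [flipL, flipL_cons_ne_nil x hne, ih]

theorem flip_comm : ∀ w : List Bool,
    aFun (flipL w) = flipL (aFun w) ∧ bFun (flipL w) = flipL (bFun w) ∧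
    cFun (flipL w) = flipL (cFun w) ∧ dFun (flipL w) = flipL (dFun w) := by
  intro w
  induction w with
  | nil => exact ⟨rfl, rfl, rfl, rfl⟩
  | cons x t ih =>
    cases t with
    | nil => cases x <;> exact ⟨rfl, rfl, rfl, rfl⟩
    | cons y u =>
      obtain ⟨iha, ihb, ihc, ihd⟩ := ih
      cases x <;> cases y <;>
        simp_all [flipL, aFun, bFun, cFun, dFun]

theorem take_comm : ∀ (w : List Bool) (m : ℕ),
    (aFun w).take m = aFun (w.take m) ∧ (bFun w).take m = bFun (w.take m) ∧
    (cFun w).take m = cFun (w.take m) ∧ (dFun w).take m = dFun (w.take m) := by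
  intro w
  induction w with
  | nil => intro m; simp [aFun, bFun, cFun, dFun]
  | cons x t ih =>
    intro m
    cases m with
    | zero => simp [aFun, bFun, cFun, dFun]
    | succ m =>
      obtain ⟨iha, ihb, ihc, ihd⟩ := ih m
      cases x <;> simp_all [aFun, bFun, cFun, dFun]


/-! ### Level machinery -/

theorem ofFn_levelFun {n : ℕ} {f : List Bool → List Bool} (hlen : ∀ l, (f l).length = l.length)
    (u : Fin n → Bool) : List.ofFn (levelFun n f u) = f (List.ofFn u) := by
  apply List.ext_getElem
  · simp [hlen]
  · intro i h1 h2
    simp only [List.getElem_ofFn]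
    simp [levelFun, List.getD_eq_getElem, h2]

/-- The level-`n` flip of the last letter, as a permutation of `X_n`. -/
def flipLev (n : ℕ) : Perm (XL n) :=
  (levelFun_involutive n flipL flipL_length flipL_invol).toPerm

theorem levelFun_flip_comm {n : ℕ} {f : List Bool → List Bool}
    (hlen : ∀ l, (f l).length = l.length)
    (hc : ∀ w, f (flipL w) = flipL (f w)) (v : XL n) :
    levelFun n f (flipLev n v) = flipLev n (levelFun n f v) := by
  have h1 : (flipLev n v : XL n) = levelFun n flipL v := rfl
  have h2 : ∀ u : XL n, (flipLev n u : XL n) = levelFun n flipL u := fun _ => rfl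
  rw [h1, h2]
  funext i
  show (f (List.ofFn (levelFun n flipL v))).getD i false
      = (flipL (List.ofFn (levelFun n f v))).getD i false
  rw [ofFn_levelFun flipL_length, ofFn_levelFun hlen, hc]

/-- The truncated Grigorchuk generators. -/
def SLevSet (n : ℕ) : Set (Perm (XL n)) := {aLev n, bLev n, cLev n, dLev n}

theorem sLev_flip_comm {n : ℕ} {s : Perm (XL n)} (hs : s ∈ SLevSet n) (v : XL n) :
    s (flipLev n v) = flipLev n (s v) := by
  rcases hs with h | h | h | h
  · subst h
    exact levelFun_flip_comm aFun_length (fun w => (flip_comm w).1) v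
  · subst h
    exact levelFun_flip_comm bFun_length (fun w => (flip_comm w).2.1) v
  · subst h
    exact levelFun_flip_comm cFun_length (fun w => (flip_comm w).2.2.1) v
  · rw [Set.mem_singleton_iff] at h
    subst h
    exact levelFun_flip_comm dFun_length (fun w => (flip_comm w).2.2.2) v

theorem flipL_replicate : ∀ m : ℕ,
    flipL (List.replicate (m + 1) true) = List.replicate m true ++ [false] := by
  intro m
  induction m with
  | zero => rfl
  | succ m ih =>
    have : List.replicate (m + 2) true = true :: List.replicate (m + 1) true := rfl
    rw [this, flipL_cons_ne_nil true (by simp), ih]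
    rfl

theorem flipLev_rho (n : ℕ) : flipLev n (rhoL n) = etaL n := by
  cases n with
  | zero => funext i; exact absurd i.2 (by omega)
  | succ m =>
    funext i
    show (flipL (List.ofFn (rhoL (m + 1)))).getD (i : ℕ) false = etaL (m + 1) i
    have h1 : List.ofFn (rhoL (m + 1)) = List.replicate (m + 1) true :=
      List.ofFn_const _ _
    rw [h1, flipL_replicate m]
    have hlen : (List.replicate m true ++ [false]).length = m + 1 := by simp
    have hi : (i : ℕ) < (List.replicate m true ++ [false]).length := by
      rw [hlen]; exact i.2
    rw [List.getD_eq_getElem _ _ hi]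
    by_cases h : (i : ℕ) < m
    · rw [List.getElem_append_left (by simpa using h)]
      simp [etaL, h, List.getElem_replicate]
    · have him : (i : ℕ) = m := by omega
      rw [List.getElem_append_right (by simpa using Nat.le_of_eq him.symm)]
      simp [etaL, him]
/-! ### Words at level `n`, and the boundary-to-level transfer -/

/-- Right action of a word of level-`n` permutations. -/
def applyL {n : ℕ} (l : List (Perm (XL n))) (v : XL n) : XL n :=
  l.foldl (fun v s => s v) v

/-- The inverted orbit of a word at level `n`. -/
def invOrbL {n : ℕ} (l : List (Perm (XL n))) (v : XL n) : Set (XL n) :=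
  {x | ∃ i : ℕ, x = applyL (l.drop i) v}

theorem applyL_cons {n : ℕ} (s : Perm (XL n)) (l : List (Perm (XL n))) (v : XL n) :
    applyL (s :: l) v = applyL l (s v) := rfl

theorem invOrbL_cons {n : ℕ} (s : Perm (XL n)) (l : List (Perm (XL n))) (v : XL n) :
    invOrbL (s :: l) v = insert (applyL (s :: l) v) (invOrbL l v) := by
  ext x
  constructor
  · rintro ⟨i, rfl⟩
    cases i with
    | zero => exact Or.inl rfl
    | succ i => exact Or.inr ⟨i, by rw [List.drop_succ_cons]⟩
  · rintro (rfl | ⟨i, rfl⟩)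
    · exact ⟨0, rfl⟩
    · exact ⟨i + 1, by rw [List.drop_succ_cons]⟩

theorem applyL_flip {n : ℕ} (l : List (Perm (XL n))) (hl : ∀ s ∈ l, s ∈ SLevSet n) (v : XL n) :
    applyL l (flipLev n v) = flipLev n (applyL l v) := by
  induction l generalizing v with
  | nil => rfl
  | cons s l ih =>
    rw [applyL_cons, applyL_cons, sLev_flip_comm (hl s (by simp)) v]
    exact ih (fun t ht => hl t (by simp [ht])) (s v)

theorem invOrbL_flip {n : ℕ} (l : List (Perm (XL n))) (hl : ∀ s ∈ l, s ∈ SLevSet n)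
    (v : XL n) : invOrbL l (flipLev n v) = flipLev n '' invOrbL l v := by
  ext x
  constructor
  · rintro ⟨i, rfl⟩
    exact ⟨applyL (l.drop i) v, ⟨i, rfl⟩,
      (applyL_flip _ (fun t ht => hl t (List.mem_of_mem_drop ht)) v).symm⟩
  · rintro ⟨y, ⟨i, rfl⟩, rfl⟩
    exact ⟨i, (applyL_flip _ (fun t ht => hl t (List.mem_of_mem_drop ht)) v).symm⟩

/-- Truncation of a boundary point at level `n`. -/
def projn (n : ℕ) (ξ : ℕ → Bool) : XL n := fun i => ξ i

theorem getD_proj {f : List Bool → List Bool} (hlen : ∀ l, (f l).length = l.length)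
    (htake : ∀ w m, (f w).take m = f (w.take m)) (ξ : ℕ → Bool) {n : ℕ} (i : ℕ) (h : i < n) :
    (f (List.ofFn fun j : Fin (i + 1) => ξ j)).getD i false
      = (f (List.ofFn fun j : Fin n => ξ j)).getD i false := by
  have hof : (List.ofFn fun j : Fin n => ξ j).take (i + 1)
      = List.ofFn fun j : Fin (i + 1) => ξ j := by
    apply List.ext_getElem
    · simp; omega
    · intro k h1 h2
      simp only [List.getElem_take, List.getElem_ofFn]
  rw [← hof, ← htake]
  have hl2 : i < (f (List.ofFn fun j : Fin n => ξ j)).length := by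
    rw [hlen]; simpa using h
  have hl1 : i < ((f (List.ofFn fun j : Fin n => ξ j)).take (i + 1)).length := by
    rw [List.length_take]
    omega
  rw [List.getD_eq_getElem _ _ hl1, List.getD_eq_getElem _ _ hl2]
  exact List.getElem_take
theorem proj_step {n : ℕ} {g : Perm (List Bool)} {f : List Bool → List Bool}
    (hg : ∀ w, g w = f w) (hlen : ∀ l, (f l).length = l.length)
    (htake : ∀ w m, (f w).take m = f (w.take m)) (ξ : ℕ → Bool) :
    projn n (boundaryAct g ξ) = levelFun n f (projn n ξ) := by
  funext i
  show (g (List.ofFn fun j : Fin ((i : ℕ) + 1) => ξ j)).getD i false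
      = (f (List.ofFn (projn n ξ))).getD i false
  rw [hg]
  exact getD_proj hlen htake ξ i i.2

/-- The correspondence between the boundary and level-`n` generators. -/
def SRel {n : ℕ} (g : Perm (List Bool)) (s : Perm (XL n)) : Prop :=
  (g = aPerm ∧ s = aLev n) ∨ (g = bPerm ∧ s = bLev n) ∨
  (g = cPerm ∧ s = cLev n) ∨ (g = dPerm ∧ s = dLev n)

theorem proj_step_rel {n : ℕ} {g : Perm (List Bool)} {s : Perm (XL n)} (h : SRel g s)
    (ξ : ℕ → Bool) : projn n (boundaryAct g ξ) = s (projn n ξ) := by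
  rcases h with ⟨rfl, rfl⟩ | ⟨rfl, rfl⟩ | ⟨rfl, rfl⟩ | ⟨rfl, rfl⟩
  · exact proj_step (fun w => rfl) aFun_length (fun w m => (take_comm w m).1) ξ
  · exact proj_step (fun w => rfl) bFun_length (fun w m => (take_comm w m).2.1) ξ
  · exact proj_step (fun w => rfl) cFun_length (fun w m => (take_comm w m).2.2.1) ξ
  · exact proj_step (fun w => rfl) dFun_length (fun w m => (take_comm w m).2.2.2) ξ

theorem word_equiv {n : ℕ} {lb : List (Perm (List Bool))} {l : List (Perm (XL n))}
    (h : List.Forall₂ SRel lb l) (ξ : ℕ → Bool) :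
    projn n (wordApplyB lb ξ) = applyL l (projn n ξ) := by
  induction h generalizing ξ with
  | nil => rfl
  | @cons g s lb' l' hrel htail ih =>
    show projn n (wordApplyB lb' (boundaryAct g ξ)) = applyL l' (s (projn n ξ))
    rw [ih (boundaryAct g ξ), proj_step_rel hrel]

theorem lift_word {n : ℕ} : ∀ l : List (Perm (XL n)), (∀ s ∈ l, s ∈ SLevSet n) →
    ∃ lb : List (Perm (List Bool)), (∀ g ∈ lb, g ∈ Grig.Sset) ∧ List.Forall₂ SRel lb l := by
  intro l
  induction l with
  | nil => exact fun _ => ⟨[], by simp, List.Forall₂.nil⟩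
  | cons s l ih =>
    intro hl
    obtain ⟨lb, hlb, hrel⟩ := ih (fun t ht => hl t (by simp [ht]))
    have hs := hl s (by simp)
    have key : ∃ g : Perm (List Bool), g ∈ Grig.Sset ∧ SRel g s := by
      rcases hs with h | h | h | h
      · exact ⟨aPerm, by simp [Grig.Sset], Or.inl ⟨rfl, h⟩⟩
      · exact ⟨bPerm, by simp [Grig.Sset], Or.inr (Or.inl ⟨rfl, h⟩)⟩
      · exact ⟨cPerm, by simp [Grig.Sset], Or.inr (Or.inr (Or.inl ⟨rfl, h⟩))⟩
      · rw [Set.mem_singleton_iff] at h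
        exact ⟨dPerm, by simp [Grig.Sset], Or.inr (Or.inr (Or.inr ⟨rfl, h⟩))⟩
    obtain ⟨g, hgS, hgrel⟩ := key
    refine ⟨g :: lb, ?_, List.Forall₂.cons hgrel hrel⟩
    intro g' hg'
    rcases List.mem_cons.mp hg' with rfl | hg'
    · exact hgS
    · exact hlb g' hg'

theorem orbit_proj {n : ℕ} {lb : List (Perm (List Bool))} {l : List (Perm (XL n))}
    (h : List.Forall₂ SRel lb l) :
    invOrbL l (rhoL n) = projn n '' invOrbitB lb rhoInf := by
  ext x
  constructor
  · rintro ⟨i, rfl⟩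
    refine ⟨wordApplyB (lb.drop i) rhoInf, ⟨i, rfl⟩, ?_⟩
    have := word_equiv (List.forall₂_drop i h) rhoInf
    rw [this]
    rfl
  · rintro ⟨y, ⟨i, rfl⟩, rfl⟩
    refine ⟨i, ?_⟩
    have := word_equiv (List.forall₂_drop i h) rhoInf
    rw [this]
    rfl
/-! ### The algebraic structure of the second factor -/

/-- Diagonal level permutations, as a homomorphism into `Perm (X_n × {1,...,4})`. -/
def B1 (n : ℕ) : Perm (XL n) →* Perm (XL n × Fin 4) where
  toFun s := s.prodCongr (Equiv.refl (Fin 4))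
  map_one' := Equiv.ext fun _ => rfl
  map_mul' _ _ := Equiv.ext fun _ => rfl

/-- Fiberwise sheet permutations, as a homomorphism into `Perm (X_n × {1,...,4})`. -/
def PCR (n : ℕ) : (XL n → Perm (Fin 4)) →* Perm (XL n × Fin 4) where
  toFun F := Equiv.prodCongrRight F
  map_one' := Equiv.ext fun _ => rfl
  map_mul' _ _ := Equiv.ext fun _ => rfl

/-- Base permutations, as a homomorphism into the homeomorphism group. -/
def ΦH (n : ℕ) : Perm (XL n × Fin 4) →* (Mn n ≃ₜ Mn n) where
  toFun e := basePermHomeo e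
  map_one' := Homeomorph.ext fun _ => rfl
  map_mul' _ _ := Homeomorph.ext fun _ => rfl

theorem PCR_mul_B1 {n : ℕ} (F : XL n → Perm (Fin 4)) (σ : Perm (XL n)) :
    PCR n F * B1 n σ = B1 n σ * PCR n (fun x => F (σ x)) :=
  Equiv.ext fun _ => rfl

theorem conj_PCR {n : ℕ} (F : XL n → Perm (Fin 4)) (σ : Perm (XL n)) :
    (B1 n σ)⁻¹ * PCR n F * B1 n σ = PCR n (fun x => F (σ x)) := by
  rw [mul_assoc, PCR_mul_B1, ← mul_assoc, inv_mul_cancel, one_mul]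

theorem sLev_inv {n : ℕ} {s : Perm (XL n)} (hs : s ∈ SLevSet n ∪ {1}) : s⁻¹ = s := by
  rcases hs with (h | h | h | h) | h
  · subst h; exact Equiv.ext fun _ => rfl
  · subst h; exact Equiv.ext fun _ => rfl
  · subst h; exact Equiv.ext fun _ => rfl
  · rw [Set.mem_singleton_iff] at h; subst h; exact Equiv.ext fun _ => rfl
  · rw [Set.mem_singleton_iff] at h; subst h; exact inv_one

theorem prod_inv_apply {n : ℕ} : ∀ (l : List (Perm (XL n))), (∀ s ∈ l, s⁻¹ = s) →
    ∀ v : XL n, (l.prod)⁻¹ v = applyL l v := by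
  intro l
  induction l with
  | nil => intro _ v; rfl
  | cons s l ih =>
    intro hl v
    rw [List.prod_cons, mul_inv_rev, Perm.mul_apply, hl s (by simp), applyL_cons]
    exact ih (fun t ht => hl t (by simp [ht])) (s v)

/-- The decomposition of the `gpart`/`apart` of an arbitrary letter. -/
theorem letter_decomp (n : ℕ) (t : Mn n ≃ₜ Mn n) :
    ∃ s ∈ SLevSet n ∪ {1}, ∃ π : Perm (Fin 4),
      gpart n t = ΦH n (B1 n s) ∧
      apart n 2 t = ΦH n (PCR n (fun x => if x = etaL n then π else 1)) := by
  have hg : ∃ s ∈ SLevSet n ∪ {1}, gpart n t = ΦH n (B1 n s) := by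
    by_cases h1 : t ∈ Type1Set n
    · have hgt : gpart n t = t := if_pos h1
      rcases h1 with h | h | h | h
      · exact ⟨aLev n, Or.inl (Or.inl rfl), by rw [hgt, h]; rfl⟩
      · exact ⟨bLev n, Or.inl (Or.inr (Or.inl rfl)), by rw [hgt, h]; rfl⟩
      · exact ⟨cLev n, Or.inl (Or.inr (Or.inr (Or.inl rfl))), by rw [hgt, h]; rfl⟩
      · rw [Set.mem_singleton_iff] at h
        exact ⟨dLev n, Or.inl (Or.inr (Or.inr (Or.inr rfl))), by rw [hgt, h]; rfl⟩
    · exact ⟨1, Or.inr rfl, by rw [gpart, if_neg h1, map_one, map_one]⟩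
  have ha : ∃ π : Perm (Fin 4),
      apart n 2 t = ΦH n (PCR n (fun x => if x = etaL n then π else 1)) := by
    by_cases h2 : t ∈ TV.typeSet n 2
    · have hat : apart n 2 t = t := if_pos h2
      have h2' : t ∈ Type2Set n := h2
      obtain ⟨π, hπ⟩ := h2'
      exact ⟨π, by rw [hat, ← hπ]; rfl⟩
    · refine ⟨1, ?_⟩
      rw [apart, if_neg h2]
      have : (fun x : XL n => if x = etaL n then (1 : Perm (Fin 4)) else 1)
          = (1 : XL n → Perm (Fin 4)) := by funext x; simp
      rw [this, map_one, map_one]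
  obtain ⟨s, hs, hgs⟩ := hg
  obtain ⟨π, hπ⟩ := ha
  exact ⟨s, hs, π, hgs, hπ⟩
theorem pjfac_cons (n j : ℕ) (t : Mn n ≃ₜ Mn n) (w : List (Mn n ≃ₜ Mn n)) :
    pjfac n j (t :: w) =
      ((((t :: w).map (gpart n)).prod)⁻¹ * apart n j t * ((t :: w).map (gpart n)).prod)
        * pjfac n j w := by
  show (List.ofFn fun i : Fin (w.length + 1) =>
      ((((t :: w).map (gpart n)).drop (i : ℕ)).prod)⁻¹ * apart n j ((t :: w).get i) *
        (((t :: w).map (gpart n)).drop (i : ℕ)).prod).prod = _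
  rw [List.ofFn_succ, List.prod_cons]
  congr 1

/-- Normal form of the second factor: it is a sheet permutation supported on the
inverted orbit of `η_n` under the word of level-1 parts. -/
theorem normal_form (n : ℕ) : ∀ w : List (Mn n ≃ₜ Mn n),
    ∃ (l : List (Perm (XL n))) (F : XL n → Perm (Fin 4)),
      (∀ s ∈ l, s ∈ SLevSet n ∪ {1}) ∧ l.length = w.length ∧
      (w.map (gpart n)).prod = ΦH n (B1 n l.prod) ∧
      pjfac n 2 w = ΦH n (PCR n F) ∧
      (∀ x : XL n, F x ≠ 1 → ∃ i : ℕ, x = applyL (l.drop i) (etaL n)) := by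
  intro w
  induction w with
  | nil =>
    refine ⟨[], 1, by simp, rfl, ?_, ?_, fun x hx => absurd rfl hx⟩
    · simp [map_one]
    · show (List.ofFn (fun i : Fin 0 => _)).prod = _
      rw [List.ofFn_zero, List.prod_nil, map_one, map_one]
  | cons t w ih =>
    obtain ⟨l, F, hl, hlen, hQ, hpj, hsupp⟩ := ih
    obtain ⟨s, hs, π, hgs, hπ⟩ := letter_decomp n t
    set D : XL n → Perm (Fin 4) := fun y => if y = etaL n then π else 1 with hD
    set σ : Perm (XL n) := s * l.prod with hσ
    refine ⟨s :: l, fun x => D (σ x) * F x, ?_, by simp [hlen], ?_, ?_, ?_⟩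
    · intro u hu
      rcases List.mem_cons.mp hu with rfl | hu
      · exact hs
      · exact hl u hu
    · rw [List.map_cons, List.prod_cons, hgs, hQ, ← map_mul, ← map_mul, List.prod_cons]
    · rw [pjfac_cons, hpj, hπ]
      rw [List.map_cons, List.prod_cons, hgs, hQ, ← map_mul, ← map_mul]
      rw [← map_inv, ← map_mul, ← map_mul, conj_PCR, ← map_mul, ← map_mul]
      congr 2
    · intro x hx
      have hx' : D (σ x) * F x ≠ 1 := hx
      by_cases hDx : D (σ x) = 1
      · have hFx : F x ≠ 1 := by
          intro h
          rw [hDx, h, one_mul] at hx'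
          exact hx' rfl
        obtain ⟨i, hi⟩ := hsupp x hFx
        exact ⟨i + 1, by rw [List.drop_succ_cons]; exact hi⟩
      · have hση : σ x = etaL n := by
          by_contra hne
          apply hDx
          show (if σ x = etaL n then π else 1) = 1
          rw [if_neg hne]
        refine ⟨0, ?_⟩
        have hinv : ((s :: l).prod)⁻¹ (etaL n) = applyL (s :: l) (etaL n) :=
          prod_inv_apply (s :: l) (fun u hu => sLev_inv (by
            rcases List.mem_cons.mp hu with rfl | hu
            · exact hs
            · exact hl u hu)) (etaL n)
        have hprod : (s :: l).prod = σ := by rw [List.prod_cons]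
        rw [List.drop_zero, ← hinv, hprod, ← hση, ← Perm.mul_apply, inv_mul_cancel, Perm.one_apply]

/-- Removing trivial letters from a word. -/
theorem cleanup {n : ℕ} : ∀ l : List (Perm (XL n)), (∀ s ∈ l, s ∈ SLevSet n ∪ {1}) →
    ∃ l' : List (Perm (XL n)), (∀ s ∈ l', s ∈ SLevSet n) ∧ l'.length ≤ l.length ∧
      (∀ v, applyL l' v = applyL l v) ∧ (∀ v, invOrbL l' v = invOrbL l v) := by
  intro l
  induction l with
  | nil => exact fun _ => ⟨[], by simp, le_refl _, fun _ => rfl, fun _ => rfl⟩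
  | cons s l ih =>
    intro hl
    obtain ⟨l', h1, h2, h3, h4⟩ := ih (fun t ht => hl t (by simp [ht]))
    rcases hl s (by simp) with hs | hs
    · refine ⟨s :: l', fun t ht => ?_, by simpa using h2, fun v => ?_, fun v => ?_⟩
      · rcases List.mem_cons.mp ht with rfl | ht
        · exact hs
        · exact h1 t ht
      · rw [applyL_cons, applyL_cons, h3]
      · rw [invOrbL_cons, invOrbL_cons, h4, applyL_cons, applyL_cons, h3]
    · rw [Set.mem_singleton_iff] at hs
      subst hs
      refine ⟨l', h1, by simpa using Nat.le_succ_of_le h2, fun v => ?_, fun v => ?_⟩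
      · rw [h3]
        show applyL l ((1 : Perm (XL n)) v) = applyL l v
        rw [Perm.one_apply]
      · rw [h4]
        ext x
        constructor
        · rintro ⟨i, rfl⟩
          exact ⟨i + 1, by rw [List.drop_succ_cons]⟩
        · rintro ⟨i, rfl⟩
          cases i with
          | zero =>
            refine ⟨0, ?_⟩
            show applyL l v = applyL l ((1 : Perm (XL n)) v)
            rw [Perm.one_apply]
          | succ i => exact ⟨i, by rw [List.drop_succ_cons]⟩
/-! ### Counting -/

theorem invOrbitB_eq_range (l : List (Perm (List Bool))) (ξ : ℕ → Bool) :
    invOrbitB l ξ = Set.range (fun i : Fin (l.length + 1) => wordApplyB (l.drop i) ξ) := by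
  ext x
  constructor
  · rintro ⟨i, rfl⟩
    by_cases h : i ≤ l.length
    · exact ⟨⟨i, by omega⟩, rfl⟩
    · refine ⟨⟨l.length, by omega⟩, ?_⟩
      show wordApplyB (l.drop l.length) ξ = wordApplyB (l.drop i) ξ
      rw [List.drop_length, List.drop_eq_nil_of_le (by omega)]
  · rintro ⟨i, rfl⟩
    exact ⟨i, rfl⟩

theorem invOrbitB_finite (l : List (Perm (List Bool))) (ξ : ℕ → Bool) :
    (invOrbitB l ξ).Finite := by
  rw [invOrbitB_eq_range]
  exact Set.finite_range _

theorem card_invOrbitB_le (l : List (Perm (List Bool))) (ξ : ℕ → Bool) :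
    Nat.card (invOrbitB l ξ) ≤ l.length + 1 := by
  rw [invOrbitB_eq_range]
  calc Nat.card (Set.range fun i : Fin (l.length + 1) => wordApplyB (l.drop i) ξ)
      ≤ Nat.card (Fin (l.length + 1)) := Finite.card_range_le _
    _ = l.length + 1 := by simp

theorem le_DeltaB {m : ℕ} {l : List (Perm (List Bool))} (hS : ∀ x ∈ l, x ∈ Grig.Sset)
    (hlen : l.length ≤ m) : Nat.card (invOrbitB l rhoInf) ≤ DeltaB m := by
  apply le_csSup
  · refine ⟨m + 1, ?_⟩
    rintro k ⟨l', hl', hlen', rfl⟩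
    exact le_trans (card_invOrbitB_le l' rhoInf) (by omega)
  · exact ⟨l, hS, hlen, rfl⟩

theorem finite_words {β : Type*} {A : Set β} (hA : A.Finite) :
    ∀ m : ℕ, {l : List β | (∀ x ∈ l, x ∈ A) ∧ l.length ≤ m}.Finite := by
  intro m
  induction m with
  | zero =>
    apply Set.Finite.subset (Set.finite_singleton ([] : List β))
    rintro l ⟨-, hlen⟩
    simp [List.length_eq_zero_iff.mp (Nat.le_zero.mp hlen)]
  | succ m ih =>
    apply Set.Finite.subset
      (Set.Finite.insert [] ((hA.prod ih).image (fun p : β × List β => p.1 :: p.2)))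
    rintro l ⟨hmem, hlen⟩
    cases l with
    | nil => exact Set.mem_insert _ _
    | cons x t =>
      refine Set.mem_insert_of_mem _ ⟨(x, t), ⟨hmem x (by simp), ?_, ?_⟩, rfl⟩
      · exact fun y hy => hmem y (by simp [hy])
      · simpa using hlen

/-- The family of inverted orbits of boundary words. -/
def BFam (m : ℕ) : Set (Set (ℕ → Bool)) :=
  {O | ∃ l : List (Equiv.Perm (List Bool)),
    (∀ x ∈ l, x ∈ Grig.Sset) ∧ l.length ≤ m ∧ O = invOrbitB l rhoInf}

theorem Sset_finite : Grig.Sset.Finite :=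
  (((Set.finite_singleton (dPerm)).insert (cPerm)).insert (bPerm)).insert (aPerm)

theorem BFam_finite (m : ℕ) : (BFam m).Finite := by
  have : BFam m = (fun l => invOrbitB l rhoInf) ''
      {l : List (Equiv.Perm (List Bool)) | (∀ x ∈ l, x ∈ Grig.Sset) ∧ l.length ≤ m} := by
    ext O
    constructor
    · rintro ⟨l, h1, h2, rfl⟩
      exact ⟨l, ⟨h1, h2⟩, rfl⟩
    · rintro ⟨l, ⟨h1, h2⟩, rfl⟩
      exact ⟨l, h1, h2, rfl⟩
  rw [this]
  exact (finite_words Sset_finite m).image _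

theorem NorbB_eq_card (m : ℕ) : NorbB m = Nat.card (BFam m) := rfl

theorem exists_injOn_toFin {X : Type*} (s : Set X) (hs : s.Finite) (k : ℕ)
    (h : Nat.card s ≤ k) : ∃ f : X → Fin (k + 1), Set.InjOn f s := by
  classical
  have : Finite s := hs
  let e := Finite.equivFin s
  refine ⟨fun x => if hx : x ∈ s then Fin.castLE (by omega) (e ⟨x, hx⟩) else 0, ?_⟩
  intro x hx y hy hxy
  dsimp only at hxy
  rw [dif_pos hx, dif_pos hy] at hxy
  exact Subtype.ext_iff.mp (e.injective (Fin.castLE_injective _ hxy))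
/-- Counting functions supported on one of a family of small sets. -/
theorem card_supported_le {X : Type*} [Finite X] {G : Type*} [Group G] [Finite G]
    (Fam : Set (Set X)) (k : ℕ)
    (hFam : ∀ O ∈ Fam, ∃ f : X → Fin (k + 1), Set.InjOn f O) :
    Nat.card {F : X → G | ∃ O ∈ Fam, ∀ x, F x ≠ 1 → x ∈ O}
      ≤ Nat.card Fam * Nat.card G ^ (k + 1) := by
  classical
  choose E' hE' using hFam
  set E : Set X → X → Fin (k + 1) :=
    fun O => if h : O ∈ Fam then E' O h else fun _ => 0 with hEdef
  have hE : ∀ O ∈ Fam, Set.InjOn (E O) O := by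
    intro O hO
    rw [hEdef]
    simpa [dif_pos hO] using hE' O hO
  set Good : Set (X → G) := {F : X → G | ∃ O ∈ Fam, ∀ x, F x ≠ 1 → x ∈ O} with hGood
  have hpick1 : ∀ F : Good, F.2.choose ∈ Fam := fun F => F.2.choose_spec.1
  have hpick2 : ∀ F : Good, ∀ x, F.1 x ≠ 1 → x ∈ F.2.choose := fun F => F.2.choose_spec.2
  set enc : Good → Fam × (Fin (k + 1) → G) := fun F =>
    ⟨⟨F.2.choose, hpick1 F⟩, fun j =>
      if hj : ∃ x, x ∈ F.2.choose ∧ E F.2.choose x = j then F.1 hj.choose else 1⟩ with henc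
  have hrec : ∀ (F : Good) (x : X), x ∈ F.2.choose →
      (enc F).2 (E F.2.choose x) = F.1 x := by
    intro F x hx
    have hcond : ∃ y, y ∈ F.2.choose ∧ E F.2.choose y = E F.2.choose x := ⟨x, hx, rfl⟩
    show (if hj : ∃ y, y ∈ F.2.choose ∧ E F.2.choose y = E F.2.choose x
        then F.1 hj.choose else 1) = F.1 x
    rw [dif_pos hcond]
    have hspec := hcond.choose_spec
    have heq : hcond.choose = x := hE _ (hpick1 F) hspec.1 hx hspec.2
    rw [heq]
  have hinj : Function.Injective enc := by
    intro F G' h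
    have h1 : F.2.choose = G'.2.choose := Subtype.ext_iff.mp (congrArg Prod.fst h)
    have h2 : (enc F).2 = (enc G').2 := congrArg Prod.snd h
    apply Subtype.ext
    funext x
    by_cases hx : x ∈ F.2.choose
    · have e1 := hrec F x hx
      have e2 := hrec G' x (h1 ▸ hx)
      rw [← e1, h2, h1]
      exact hrec G' x (h1 ▸ hx)
    · have hF1 : F.1 x = 1 := by
        by_contra hne
        exact hx (hpick2 F x hne)
      have hG1 : G'.1 x = 1 := by
        by_contra hne
        exact (h1 ▸ hx) (hpick2 G' x hne)
      rw [hF1, hG1]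
  calc Nat.card Good ≤ Nat.card (Fam × (Fin (k + 1) → G)) :=
        Nat.card_le_card_of_injective enc hinj
    _ = Nat.card Fam * Nat.card G ^ (k + 1) := by
        rw [Nat.card_prod, Nat.card_fun]
        simp

/-- The main counting bound for the second factor. -/
theorem card_Pjset2_le (n ℓ : ℕ) :
    Nat.card (Pjset n 2 ℓ) ≤ NorbB ℓ * 24 ^ (DeltaB ℓ + 1) := by
  classical
  set Δ := DeltaB ℓ with hΔdef
  set Fam : Set (Set (XL n)) :=
    {O | ∃ l : List (Perm (XL n)),
      (∀ s ∈ l, s ∈ SLevSet n) ∧ l.length ≤ ℓ ∧ O = invOrbL l (etaL n)} with hFamdef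
  have hOrb : ∀ O ∈ Fam, ∃ B ∈ BFam ℓ, O = flipLev n '' (projn n '' B) := by
    rintro O ⟨l, hl, hlen, rfl⟩
    obtain ⟨lb, hlb, hrel⟩ := lift_word l hl
    refine ⟨invOrbitB lb rhoInf, ⟨lb, hlb, by rw [hrel.length_eq]; exact hlen, rfl⟩, ?_⟩
    rw [← orbit_proj hrel, ← invOrbL_flip l hl, flipLev_rho]
  have hFin : ∀ O ∈ Fam, O.Finite ∧ Nat.card O ≤ Δ := by
    intro O hO
    obtain ⟨B, hB, rfl⟩ := hOrb O hO
    obtain ⟨lb, hlb, hlen, rfl⟩ := hB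
    refine ⟨((invOrbitB_finite lb rhoInf).image _).image _, ?_⟩
    calc Nat.card (flipLev n '' (projn n '' invOrbitB lb rhoInf))
        ≤ Nat.card (projn n '' invOrbitB lb rhoInf) :=
          Nat.card_image_le ((invOrbitB_finite lb rhoInf).image _)
      _ ≤ Nat.card (invOrbitB lb rhoInf) := Nat.card_image_le (invOrbitB_finite lb rhoInf)
      _ ≤ Δ := le_DeltaB hlb hlen
  have hFamCard : Nat.card Fam ≤ NorbB ℓ := by
    have hsub : Fam ⊆ (fun B => flipLev n '' (projn n '' B)) '' BFam ℓ := by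
      intro O hO
      obtain ⟨B, hB, hOB⟩ := hOrb O hO
      exact ⟨B, hB, hOB.symm⟩
    calc Nat.card Fam ≤ Nat.card ((fun B => flipLev n '' (projn n '' B)) '' BFam ℓ) :=
          Nat.card_mono ((BFam_finite ℓ).image _) hsub
      _ ≤ Nat.card (BFam ℓ) := Nat.card_image_le (BFam_finite ℓ)
      _ = NorbB ℓ := (NorbB_eq_card ℓ).symm
  set Good : Set (XL n → Perm (Fin 4)) :=
    {F | ∃ O ∈ Fam, ∀ x, F x ≠ 1 → x ∈ O} with hGooddef
  have hPsub : Pjset n 2 ℓ ⊆ (fun F => ΦH n (PCR n F)) '' Good := by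
    rintro p ⟨w, hw, hwlen, rfl⟩
    obtain ⟨l, F, hl, hlen, -, hpj, hsupp⟩ := normal_form n w
    obtain ⟨l', hl', hlen', -, horb⟩ := cleanup l hl
    refine ⟨F, ⟨invOrbL l' (etaL n), ⟨l', hl', by omega, rfl⟩, ?_⟩, hpj.symm⟩
    intro x hx
    obtain ⟨i, hi⟩ := hsupp x hx
    rw [horb (etaL n)]
    exact ⟨i, hi⟩
  have hGoodCard : Nat.card Good ≤ Nat.card Fam * Nat.card (Perm (Fin 4)) ^ (Δ + 1) :=
    card_supported_le Fam Δ (fun O hO => exists_injOn_toFin O (hFin O hO).1 Δ (hFin O hO).2)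
  have h24 : Nat.card (Perm (Fin 4)) = 24 := by
    rw [Nat.card_eq_fintype_card, Fintype.card_perm]
    rfl
  calc Nat.card (Pjset n 2 ℓ)
      ≤ Nat.card ((fun F => ΦH n (PCR n F)) '' Good) :=
        Nat.card_mono ((Set.toFinite Good).image _) hPsub
    _ ≤ Nat.card Good := Nat.card_image_le (Set.toFinite Good)
    _ ≤ Nat.card Fam * Nat.card (Perm (Fin 4)) ^ (Δ + 1) := hGoodCard
    _ ≤ NorbB ℓ * 24 ^ (Δ + 1) := by
        rw [h24]
        exact Nat.mul_le_mul_right _ hFamCard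

end AuxProof

/-- **Counting the second factor:** if `Δ_ρ^S(m) ≤ C m^α` and `N_ρ^S(m) ≤ exp(C m^α)`
for all `m ≥ 1`, with `C > 0` and `0 < α < 1`, then there is a constant `C₂ > 0` with
`|P_2(ℓ)| ≤ exp(C₂ ℓ^α)` for every sufficiently large `n` and every `ℓ ≤ r_n = 2^⌊n/2⌋`. -/
theorem counting_p2 (C α : ℝ) (hC : 0 < C) (hα₀ : 0 < α) (hα₁ : α < 1)
    (hyp : ∀ m : ℕ, 1 ≤ m →
      (DeltaB m : ℝ) ≤ C * (m : ℝ) ^ α ∧ (NorbB m : ℝ) ≤ Real.exp (C * (m : ℝ) ^ α)) :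
    ∃ C₂ : ℝ, 0 < C₂ ∧ ∃ N : ℕ, ∀ n : ℕ, N ≤ n → ∀ ℓ : ℕ, ℓ ≤ 2 ^ (n / 2) →
      (Nat.card (Pjset n 2 ℓ) : ℝ) ≤ Real.exp (C₂ * (ℓ : ℝ) ^ α) := by
  have hlog : 0 < Real.log 24 := Real.log_pos (by norm_num)
  refine ⟨C + (C + 1) * Real.log 24, by nlinarith, 1, fun n hn ℓ hℓ => ?_⟩
  set C₂ := C + (C + 1) * Real.log 24 with hC₂
  rcases Nat.eq_zero_or_pos ℓ with rfl | hℓ1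
  · have hsub : Pjset n 2 0 ⊆ {1} := by
      rintro p ⟨w, -, hlen, rfl⟩
      have hw : w = [] := List.length_eq_zero_iff.mp (Nat.le_zero.mp hlen)
      subst hw
      show pjfac n 2 [] ∈ ({1} : Set _)
      have : pjfac n 2 [] = 1 := by
        show (List.ofFn (fun i : Fin 0 => _)).prod = 1
        rw [List.ofFn_zero, List.prod_nil]
      simp [this]
    have hcard : Nat.card (Pjset n 2 0) ≤ 1 := by
      calc Nat.card (Pjset n 2 0) ≤ Nat.card ({1} : Set (TV.Mn n ≃ₜ TV.Mn n)) :=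
            Nat.card_mono (Set.finite_singleton _) hsub
        _ = 1 := by simp
    have hrhs : Real.exp (C₂ * ((0 : ℕ) : ℝ) ^ α) = 1 := by
      rw [Nat.cast_zero, Real.zero_rpow (ne_of_gt hα₀), mul_zero, Real.exp_zero]
    rw [hrhs]
    exact_mod_cast hcard
  · -- main case
    obtain ⟨hΔ, hN⟩ := hyp ℓ hℓ1
    have key := card_Pjset2_le n ℓ
    have hℓα1 : (1 : ℝ) ≤ (ℓ : ℝ) ^ α := by
      calc (1 : ℝ) = (1 : ℝ) ^ α := (Real.one_rpow α).symm
        _ ≤ (ℓ : ℝ) ^ α := Real.rpow_le_rpow (by norm_num) (by exact_mod_cast hℓ1) hα₀.le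
    have hℓα0 : (0 : ℝ) ≤ (ℓ : ℝ) ^ α := by linarith
    have h24pow : ((24 : ℕ) : ℝ) ^ (DeltaB ℓ + 1)
        = Real.exp (Real.log 24 * ((DeltaB ℓ : ℝ) + 1)) := by
      have h1 : ((24 : ℕ) : ℝ) ^ ((((DeltaB ℓ + 1) : ℕ)) : ℝ)
          = Real.exp (Real.log (((24 : ℕ) : ℝ)) * (((DeltaB ℓ + 1) : ℕ) : ℝ)) :=
        Real.rpow_def_of_pos (by norm_num) _
      rw [Real.rpow_natCast] at h1
      rw [h1]
      norm_num
    have hexp1 : Real.log 24 * ((DeltaB ℓ : ℝ) + 1) ≤ (C + 1) * Real.log 24 * (ℓ : ℝ) ^ α := by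
      have h1 : (DeltaB ℓ : ℝ) + 1 ≤ C * (ℓ : ℝ) ^ α + 1 := by linarith
      have h2 : C * (ℓ : ℝ) ^ α + 1 ≤ (C + 1) * (ℓ : ℝ) ^ α := by nlinarith
      nlinarith
    calc (Nat.card (Pjset n 2 ℓ) : ℝ)
        ≤ (NorbB ℓ : ℝ) * ((24 : ℕ) : ℝ) ^ (DeltaB ℓ + 1) := by
          have := key
          push_cast
          exact_mod_cast Nat.cast_le.mpr key
      _ ≤ Real.exp (C * (ℓ : ℝ) ^ α) * ((24 : ℕ) : ℝ) ^ (DeltaB ℓ + 1) := by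
          apply mul_le_mul_of_nonneg_right hN
          positivity
      _ = Real.exp (C * (ℓ : ℝ) ^ α + Real.log 24 * ((DeltaB ℓ : ℝ) + 1)) := by
          rw [h24pow, ← Real.exp_add]
      _ ≤ Real.exp (C₂ * (ℓ : ℝ) ^ α) := by
          apply Real.exp_le_exp.mpr
          rw [hC₂]
          nlinarith
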